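/- Let (G,q) be a tame degenerate pre-metric group, i.e., q vanishes on the radical R = rad(G,q). Then q descends to a well-defined quadratic form q̄ on G/R, and the Gauss sums satisfy Θ(G,q) = √|R| · Θ(G/R, q̄). -/

import Mathlib

noncomputable def qzExp (x : AddCircle (1 : ℚ)) : ℂ :=
  Complex.exp (2 * Real.pi * Complex.I * ((Quotient.out x : ℚ) : ℂ))

noncomputable def gSum (G : Type*) [AddCommGroup G] (q : G → AddCircle (1 : ℚ)) : ℂ :=
  (1 / Real.sqrt (Nat.card G)) * ∑ᶠ x : G, qzExp (q x)

/-- For a tame pre-metric group, q descends to the quotient by the radical and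
Θ(G,q) = √|R| · Θ(G/R, q̄). -/
theorem stmt5 (G : Type*) [AddCommGroup G] [Finite G]
    (q : G → AddCircle (1 : ℚ))
    (hquad : ∀ (u : ℤ) (x : G), q (u • x) = u ^ 2 • q x)
    (hbil : ∀ x y z : G, q (x + y + z) - q (x + y) - q z =
      (q (x + z) - q x - q z) + (q (y + z) - q y - q z))
    (R : AddSubgroup G)
    (hR : ∀ g : G, g ∈ R ↔ ∀ z, q (g + z) - q g - q z = 0)
    (htame : ∀ g ∈ R, q g = 0) :
    ∃ qbar : G ⧸ R → AddCircle (1 : ℚ),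
      (∀ x : G, qbar (QuotientAddGroup.mk x) = q x) ∧
      (∀ (u : ℤ) (x : G ⧸ R), qbar (u • x) = u ^ 2 • qbar x) ∧
      gSum G q = Real.sqrt (Nat.card R) * gSum (G ⧸ R) qbar := by
  classical
  haveI : Fintype G := Fintype.ofFinite G
  -- q is constant on cosets
  have hconst : ∀ a b : G, (a : G ⧸ R) = (b : G ⧸ R) → q a = q b := by
    intro a b hab
    have hmem : -a + b ∈ R := (QuotientAddGroup.eq).mp hab
    have h1 : q (-a + b + a) - q (-a + b) - q a = 0 := (hR _).mp hmem a
    have h2 : q (-a + b) = 0 := htame _ hmem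
    have h3 : -a + b + a = b := by abel
    rw [h3, h2] at h1
    have h4 : q b - q a = 0 := by simpa using h1
    exact (sub_eq_zero.mp h4).symm
  set qbar : G ⧸ R → AddCircle (1 : ℚ) := fun y => q (Quotient.out y) with hqbar
  have hdesc : ∀ x : G, qbar (QuotientAddGroup.mk x) = q x := by
    intro x
    apply hconst
    exact QuotientAddGroup.out_eq' _
  refine ⟨qbar, hdesc, ?_, ?_⟩
  · intro u y
    have h1 : u • y = QuotientAddGroup.mk (u • Quotient.out y) := by
      rw [QuotientAddGroup.mk_zsmul, QuotientAddGroup.out_eq']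
    rw [h1, hdesc, hquad, ← hdesc (Quotient.out y), QuotientAddGroup.out_eq']
  · -- Gauss sum identity
    have hcardpos : (0:ℝ) < Nat.card R := by
      have : 0 < Nat.card R := Nat.card_pos
      exact_mod_cast this
    have hcardQpos : (0:ℝ) < Nat.card (G ⧸ R) := by
      have : 0 < Nat.card (G ⧸ R) := Nat.card_pos
      exact_mod_cast this
    have hcardmul : (Nat.card G : ℝ) = (Nat.card (G ⧸ R) : ℝ) * (Nat.card R : ℝ) := by
      exact_mod_cast congrArg (Nat.cast (R := ℝ))
        (AddSubgroup.card_eq_card_quotient_mul_card_addSubgroup R)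
    -- fiber cardinality
    have hfiber : ∀ y : G ⧸ R,
        Nat.card {x : G // (QuotientAddGroup.mk x : G ⧸ R) = y} = Nat.card R := by
      intro y
      refine Nat.card_congr (Equiv.symm ?_)
      refine ⟨fun r => ⟨Quotient.out y + r.1, ?_⟩,
        fun x => ⟨-Quotient.out y + x.1, ?_⟩, ?_, ?_⟩
      · have : ((Quotient.out y + r.1 : G) : G ⧸ R) = ((Quotient.out y : G) : G ⧸ R) := by
          rw [QuotientAddGroup.eq]
          simpa using r.2
        rw [this, QuotientAddGroup.out_eq']
      · rw [← QuotientAddGroup.eq]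
        rw [x.2, QuotientAddGroup.out_eq']
      · intro r; ext; simp
      · intro x; ext; simp
    -- sum over G equals card R times sum over quotient
    have hsum : ∑ x : G, qzExp (q x)
        = (Nat.card R : ℂ) * ∑ y : G ⧸ R, qzExp (qbar y) := by
      rw [← Fintype.sum_fiberwise (fun x : G => (QuotientAddGroup.mk x : G ⧸ R))
        (fun x => qzExp (q x))]
      rw [Finset.mul_sum]
      refine Finset.sum_congr rfl fun y _ => ?_
      have : ∀ x : {x : G // (QuotientAddGroup.mk x : G ⧸ R) = y},
          qzExp (q x.1) = qzExp (qbar y) := by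
        intro x
        obtain ⟨x, hx⟩ := x
        subst hx
        rw [hdesc]
      simp only [this, Finset.sum_const, Finset.card_univ, nsmul_eq_mul]
      try rw [← Nat.card_eq_fintype_card, hfiber y]
      try rw [Nat.card_eq_fintype_card]
      try rw [mul_comm]
      try ring
    have hfin1 : (∑ᶠ x : G, qzExp (q x)) = ∑ x : G, qzExp (q x) :=
      finsum_eq_sum_of_fintype _
    have hfin2 : (∑ᶠ y : G ⧸ R, qzExp (qbar y)) = ∑ y : G ⧸ R, qzExp (qbar y) :=
      finsum_eq_sum_of_fintype _
    rw [gSum, gSum, hfin1, hfin2, hsum]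
    have hcoef : (1 / (Real.sqrt (Nat.card G)) : ℂ) * (Nat.card R : ℂ)
        = (Real.sqrt (Nat.card R) : ℝ) * (1 / (Real.sqrt (Nat.card (G ⧸ R))) : ℂ) := by
      have : (Real.sqrt (Nat.card G) : ℝ)
          = Real.sqrt (Nat.card (G ⧸ R)) * Real.sqrt (Nat.card R) := by
        rw [← Real.sqrt_mul (le_of_lt hcardQpos), ← hcardmul]
      have hR2 : (Nat.card R : ℝ) = Real.sqrt (Nat.card R) * Real.sqrt (Nat.card R) :=
        (Real.mul_self_sqrt (le_of_lt hcardpos)).symm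
      have hsq : Real.sqrt (Nat.card (G ⧸ R)) ≠ 0 :=
        ne_of_gt (Real.sqrt_pos.mpr hcardQpos)
      have hsr : Real.sqrt (Nat.card R) ≠ 0 :=
        ne_of_gt (Real.sqrt_pos.mpr hcardpos)
      have keygen : ∀ a b c : ℝ, a ≠ 0 → b ≠ 0 → c = b * b →
          (1/(a*b))*c = b*(1/a) := by
        intro a b c ha hb hc
        subst hc
        field_simp
      have key : (1 / (Real.sqrt (Nat.card G)) : ℝ) * (Nat.card R : ℝ)
          = Real.sqrt (Nat.card R) * (1 / Real.sqrt (Nat.card (G ⧸ R))) := by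
        rw [this]
        exact keygen _ _ _ hsq hsr hR2
      calc (1 / (Real.sqrt (Nat.card G)) : ℂ) * (Nat.card R : ℂ)
          = (((1 / (Real.sqrt (Nat.card G)) : ℝ) * (Nat.card R : ℝ) : ℝ) : ℂ) := by
            push_cast; ring
        _ = ((Real.sqrt (Nat.card R) * (1 / Real.sqrt (Nat.card (G ⧸ R))) : ℝ) : ℂ) := by
            rw [key]
        _ = (Real.sqrt (Nat.card R) : ℝ) * (1 / (Real.sqrt (Nat.card (G ⧸ R))) : ℂ) := by
            push_cast; ring
    rw [← mul_assoc, hcoef, mul_assoc]
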